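/- Let A, B be real 2×2 matrices of determinant 1 with A·B = B·A, and suppose that each of A and B either has |trace| < 2 or is equal to 𝟙 or −𝟙. Then there exist an invertible real 2×2 matrix M and angles η_A, η_B ∈ ℝ such that M A M^{−1} = R_{η_A} and M B M^{−1} = R_{η_B}, where R_η = [[cos η, −sin η],[sin η, cos η]] is the rotation matrix by angle η. -/

import Mathlib

open MeasureTheory Filter
open scoped BigOperators ENNReal

noncomputable section

/-- Rotation matrix by angle `η`. -/
def rotMat (η : ℝ) : Matrix (Fin 2) (Fin 2) ℝ :=
  !![Real.cos η, -Real.sin η; Real.sin η, Real.cos η]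

lemma rot_zero : rotMat 0 = 1 := by
  simp [rotMat, Matrix.one_fin_two]

lemma rot_pi : rotMat Real.pi = -1 := by
  simp [rotMat, Matrix.one_fin_two]

/-- Any `SL(2,ℝ)` matrix with `|trace| < 2` is conjugate to a rotation with nonzero sine. -/
lemma conj_elliptic (A : Matrix (Fin 2) (Fin 2) ℝ) (hA : A.det = 1) (htr : |A.trace| < 2) :
    ∃ M : Matrix (Fin 2) (Fin 2) ℝ, IsUnit M.det ∧ ∃ η : ℝ,
      M * A * M⁻¹ = rotMat η ∧ Real.sin η ≠ 0 := by
  rw [Matrix.det_fin_two] at hA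
  rw [Matrix.trace_fin_two, abs_lt] at htr
  obtain ⟨h1, h2⟩ := htr
  set a := A 0 0 with ha
  set b := A 0 1 with hb
  set c := A 1 0 with hc
  set d := A 1 1 with hd
  have hc0 : c ≠ 0 := by
    intro h
    rw [h] at hA
    nlinarith [sq_nonneg (a - d)]
  have ht1 : ((a + d) / 2) ^ 2 < 1 := by nlinarith
  have hspos : (0:ℝ) < 1 - ((a + d) / 2) ^ 2 := by linarith
  set S : ℝ := Real.sqrt (1 - ((a + d) / 2) ^ 2) with hSdef
  have hS : 0 < S := Real.sqrt_pos.mpr hspos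
  have hS2 : S ^ 2 = 1 - ((a + d) / 2) ^ 2 := Real.sq_sqrt hspos.le
  clear_value S a b c d
  have hcos : Real.cos (Real.arccos ((a + d) / 2)) = (a + d) / 2 :=
    Real.cos_arccos (by nlinarith) (by nlinarith)
  have hsin : Real.sin (Real.arccos ((a + d) / 2)) = S := by
    rw [Real.sin_arccos]; exact hSdef.symm
  have hM : IsUnit (!![c / S, (d - a) / (2 * S); 0, 1] : Matrix (Fin 2) (Fin 2) ℝ).det := by
    rw [Matrix.det_fin_two_of]
    simp only [isUnit_iff_ne_zero]
    intro h
    apply hc0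
    field_simp at h
    linarith
  refine ⟨!![c / S, (d - a) / (2 * S); 0, 1], hM, Real.arccos ((a + d) / 2), ?_, ?_⟩
  · have key : !![c / S, (d - a) / (2 * S); 0, 1] * A
        = rotMat (Real.arccos ((a + d) / 2)) * !![c / S, (d - a) / (2 * S); 0, 1] := by
      rw [Matrix.eta_fin_two A, rotMat, hcos, hsin, ← ha, ← hb, ← hc, ← hd]
      ext i j
      fin_cases i <;> fin_cases j <;>
        simp [Matrix.mul_apply, Fin.sum_univ_two]
      all_goals field_simp
      all_goals try ring
      all_goals
        first
          | linear_combination (-8*S^2) * hA + 8*S^2 * hS2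
          | linear_combination (8*S^2) * hA - 8*S^2 * hS2
          | linear_combination (-4*S^2) * hA + 4*S^2 * hS2
          | linear_combination (4*S^2) * hA - 4*S^2 * hS2
          | linear_combination (-4) * hA + 4 * hS2
    rw [key, Matrix.mul_assoc, Matrix.mul_nonsing_inv _ hM, Matrix.mul_one]
  · rw [hsin]; exact hS.ne'

/-- A determinant-one matrix commuting with a genuine rotation is itself a rotation. -/
lemma commutant (η : ℝ) (hs : Real.sin η ≠ 0) (B : Matrix (Fin 2) (Fin 2) ℝ)
    (hdet : B.det = 1) (hcomm : rotMat η * B = B * rotMat η) :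
    ∃ θ : ℝ, B = rotMat θ := by
  rw [Matrix.det_fin_two] at hdet
  have e : ∀ i j : Fin 2, (rotMat η * B) i j = (B * rotMat η) i j := by
    intro i j; rw [hcomm]
  have e00 := e 0 0
  have e01 := e 0 1
  simp [rotMat, Matrix.mul_apply, Fin.sum_univ_two] at e00 e01
  have hz : B 1 0 = - B 0 1 := by
    have := e00
    have h2 : Real.sin η * B 1 0 = Real.sin η * (- B 0 1) := by
      ring_nf; ring_nf at this; linarith
    exact mul_left_cancel₀ hs h2
  have hw : B 1 1 = B 0 0 := by
    have h2 : Real.sin η * B 1 1 = Real.sin η * B 0 0 := by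
      ring_nf; ring_nf at e01; linarith
    exact mul_left_cancel₀ hs h2
  set x := B 0 0
  set y := B 0 1
  have hxy : x ^ 2 + y ^ 2 = 1 := by rw [hz, hw] at hdet; ring_nf; ring_nf at hdet; linarith
  set z : Complex := ⟨x, -y⟩ with hzdef
  have habs : ‖z‖ = 1 := by
    rw [Complex.norm_def, Complex.normSq_mk]
    rw [show x * x + -y * -y = x ^ 2 + y ^ 2 by ring, hxy, Real.sqrt_one]
  have hz0 : z ≠ 0 := by
    intro h; rw [h] at habs; simp at habs
  refine ⟨z.arg, ?_⟩
  have hcosz : Real.cos z.arg = x := by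
    rw [Complex.cos_arg hz0, habs]; simp [hzdef]
  have hsinz : Real.sin z.arg = -y := by
    rw [Complex.sin_arg, habs]; simp [hzdef]
  rw [Matrix.eta_fin_two B, hz, hw, rotMat, hcosz, hsinz]
  norm_num
  exact ⟨rfl, rfl⟩

/-- Two commuting elliptic `SL(2,ℝ)` matrices can be simultaneously conjugated to rotations. -/
theorem stmt17 (A B : Matrix (Fin 2) (Fin 2) ℝ) (hA : A.det = 1) (hB : B.det = 1)
    (hAB : A * B = B * A)
    (hellA : |A.trace| < 2 ∨ A = 1 ∨ A = -1) (hellB : |B.trace| < 2 ∨ B = 1 ∨ B = -1) :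
    ∃ M : Matrix (Fin 2) (Fin 2) ℝ, IsUnit M.det ∧ ∃ ηA ηB : ℝ,
      M * A * M⁻¹ = rotMat ηA ∧ M * B * M⁻¹ = rotMat ηB := by
  have hpm : ∀ C : Matrix (Fin 2) (Fin 2) ℝ, C = 1 ∨ C = -1 → ∃ η : ℝ, C = rotMat η := by
    rintro C (rfl | rfl)
    exacts [⟨0, rot_zero.symm⟩, ⟨Real.pi, rot_pi.symm⟩]
  rcases hellA with hA2 | hApm
  · obtain ⟨M, hM, ηA, hMA, hsin⟩ := conj_elliptic A hA hA2
    refine ⟨M, hM, ηA, ?_⟩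
    have hMi : ∀ Z : Matrix (Fin 2) (Fin 2) ℝ, M⁻¹ * (M * Z) = Z := by
      intro Z
      rw [← Matrix.mul_assoc, Matrix.nonsing_inv_mul _ hM, Matrix.one_mul]
    have key : ∀ X Y : Matrix (Fin 2) (Fin 2) ℝ,
        (M * X * M⁻¹) * (M * Y * M⁻¹) = M * (X * Y) * M⁻¹ := by
      intro X Y
      simp only [Matrix.mul_assoc, hMi]
    have hBdet : (M * B * M⁻¹).det = 1 := by
      rw [Matrix.det_mul, Matrix.det_mul, Matrix.det_nonsing_inv, hB, mul_one]
      exact Ring.mul_inverse_cancel _ hM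
    have hcomm : rotMat ηA * (M * B * M⁻¹) = (M * B * M⁻¹) * rotMat ηA := by
      rw [← hMA, key, key, hAB]
    obtain ⟨θ, hθ⟩ := commutant ηA hsin _ hBdet hcomm
    exact ⟨θ, hMA, hθ⟩
  · rcases hellB with hB2 | hBpm
    · obtain ⟨M, hM, ηB, hMB, hsin⟩ := conj_elliptic B hB hB2
      obtain ⟨ηA, hηA⟩ := hpm A hApm
      refine ⟨M, hM, ηA, ηB, ?_, hMB⟩
      rcases hApm with rfl | rfl
      · rw [Matrix.mul_one, Matrix.mul_nonsing_inv _ hM, ← hηA]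
      · rw [mul_neg_one, Matrix.neg_mul, Matrix.mul_nonsing_inv _ hM, ← hηA]
    · obtain ⟨ηA, hηA⟩ := hpm A hApm
      obtain ⟨ηB, hηB⟩ := hpm B hBpm
      refine ⟨1, by simp, ηA, ηB, ?_, ?_⟩
      · rw [Matrix.one_mul, inv_one, Matrix.mul_one, ← hηA]
      · rw [Matrix.one_mul, inv_one, Matrix.mul_one, ← hηB]
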